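/- Let G be a group acting linearly on finite-dimensional k-vector spaces W and V with n = dim V, and let m ≥ 2n. If two points v = (w, v₁, …, v_m) and v' = (w', v₁', …, v_m') of W ⊕ V^m can be separated by a G-invariant polynomial, then there exist indices 1 ≤ i₁ < … < i_{2n} ≤ m such that (w, v_{i₁}, …, v_{i_{2n}}) and (w', v_{i₁}', …, v_{i_{2n}}') can be separated by a G-invariant polynomial on W ⊕ V^{2n}. -/
import Mathlib


open scoped Pointwise

/-- A function `f : U → k` is a polynomial function if it lies in the `k`-subalgebra of
`U → k` generated by the linear functionals on `U`. -/
def IsPolyFun (k : Type) [Field k] {U : Type} [AddCommGroup U] [Module k U]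
    (f : U → k) : Prop :=
  f ∈ Algebra.adjoin k (Set.range fun φ : U →ₗ[k] k => ⇑φ)

/-- Two points of a `G`-module `U` can be separated by polynomial invariants. -/
def CanSep (k G : Type) [Field k] [Group G] {U : Type} [AddCommGroup U] [Module k U]
    [MulAction G U] (a b : U) : Prop :=
  ∃ f : U → k, IsPolyFun k f ∧ (∀ (g : G) (x : U), f (g • x) = f x) ∧ f a ≠ f b

/-- Precomposition with a linear map preserves being a polynomial function. -/
lemma IsPolyFun.comp_linear {k : Type} [Field k] {U U' : Type} [AddCommGroup U] [Module k U]
    [AddCommGroup U'] [Module k U'] {f : U → k} (hf : IsPolyFun k f) (Φ : U' →ₗ[k] U) :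
    IsPolyFun k (f ∘ Φ) := by
  let C : (U → k) →ₐ[k] (U' → k) :=
    { toFun := fun f => f ∘ Φ
      map_one' := rfl
      map_mul' := fun _ _ => rfl
      map_zero' := rfl
      map_add' := fun _ _ => rfl
      commutes' := fun _ => rfl }
  have h1 : C f ∈ (Algebra.adjoin k (Set.range fun φ : U →ₗ[k] k => ⇑φ)).map C :=
    ⟨f, hf, rfl⟩
  rw [AlgHom.map_adjoin] at h1
  refine Algebra.adjoin_mono ?_ h1
  rintro _ ⟨_, ⟨φ, rfl⟩, rfl⟩
  exact ⟨φ.comp Φ, rfl⟩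

/-- If two points of `W ⊕ V^m` (`m ≥ 2 dim V`) can be separated by a `G`-invariant
polynomial, then they can already be separated by an invariant depending only on `2 dim V`
of the type `V` variables. -/
theorem separated_by_two_n_variables
    {k G W V : Type} [Field k] [Group G]
    [AddCommGroup W] [Module k W] [FiniteDimensional k W]
    [AddCommGroup V] [Module k V] [FiniteDimensional k V]
    [DistribMulAction G W] [SMulCommClass G k W]
    [DistribMulAction G V] [SMulCommClass G k V]
    {m : ℕ} (hm : 2 * Module.finrank k V ≤ m)
    (w w' : W) (v v' : Fin m → V)
    (hsep : CanSep k G ((w, v) : W × (Fin m → V)) (w', v')) :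
    ∃ ι : Fin (2 * Module.finrank k V) → Fin m, StrictMono ι ∧
      CanSep k G ((w, v ∘ ι) : W × (Fin (2 * Module.finrank k V) → V)) (w', v' ∘ ι) := by
  classical
  set n := Module.finrank k V with hn
  obtain ⟨f, hfpoly, hfinv, hfne⟩ := hsep
  set p : Fin m → V × V := fun i => (v i, v' i) with hp
  obtain ⟨t, hts, htspan, htind⟩ := exists_linearIndependent k (Set.range p)
  have htfin : t.Finite := htind.setFinite
  haveI : Fintype t := htfin.fintype
  have hcard : Fintype.card t ≤ 2 * n := by
    have h1 := htind.fintype_card_le_finrank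
    rwa [Module.finrank_prod, ← two_mul, ← hn] at h1
  -- choose preimage indices for elements of t
  choose g hg using fun x : t => hts x.2
  have hginj : Function.Injective g := by
    intro a b hab
    apply Subtype.ext
    rw [← hg a, ← hg b, hab]
  set I : Finset (Fin m) := Finset.univ.image g with hI
  have hIcard : I.card ≤ 2 * n := by
    calc I.card ≤ Finset.univ.card := Finset.card_image_le
    _ = Fintype.card t := Finset.card_univ
    _ ≤ 2 * n := hcard
  obtain ⟨s, hIs, hscard⟩ := Finset.exists_superset_card_eq hIcard
    (by simpa using hm)
  set ι : Fin (2 * n) → Fin m := ⇑(s.orderEmbOfFin hscard) with hι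
  have hιmono : StrictMono ι := (s.orderEmbOfFin hscard).strictMono
  -- the span of the selected vectors is everything
  have hspan : Submodule.span k (Set.range (p ∘ ι)) = Submodule.span k (Set.range p) := by
    have hrange : Set.range (p ∘ ι) = p '' ↑s := by
      rw [Set.range_comp, Finset.range_orderEmbOfFin]
    rw [hrange]
    refine le_antisymm (Submodule.span_mono (Set.image_subset_range _ _)) ?_
    rw [← htspan]
    refine Submodule.span_mono ?_
    intro x hx
    refine ⟨g ⟨x, hx⟩, ?_, hg ⟨x, hx⟩⟩
    exact hIs (Finset.mem_image_of_mem g (Finset.mem_univ _))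
  have hmem : ∀ j, p j ∈ Submodule.span k (Set.range (p ∘ ι)) := by
    intro j
    rw [hspan]
    exact Submodule.subset_span ⟨j, rfl⟩
  choose c hc using fun j => (Submodule.mem_span_range_iff_exists_fun k).mp (hmem j)
  -- the linear substitution map
  set Ψ : (Fin (2 * n) → V) →ₗ[k] (Fin m → V) :=
    LinearMap.pi (fun j => ∑ l, c j l • LinearMap.proj l) with hΨ
  set Φ : (W × (Fin (2 * n) → V)) →ₗ[k] (W × (Fin m → V)) :=
    (LinearMap.id : W →ₗ[k] W).prodMap Ψ with hΦ
  have hΨapply : ∀ (u : Fin (2 * n) → V) (j : Fin m), Ψ u j = ∑ l, c j l • u l := by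
    intro u j
    simp [hΨ, LinearMap.pi_apply, LinearMap.sum_apply, LinearMap.smul_apply]
  have hΨv : Ψ (v ∘ ι) = v := by
    funext j
    have := congrArg Prod.fst (hc j)
    rw [Prod.fst_sum] at this
    simpa [hΨapply, hp] using this
  have hΨv' : Ψ (v' ∘ ι) = v' := by
    funext j
    have := congrArg Prod.snd (hc j)
    rw [Prod.snd_sum] at this
    simpa [hΨapply, hp] using this
  have hΦequiv : ∀ (g : G) (x : W × (Fin (2 * n) → V)), Φ (g • x) = g • Φ x := by
    rintro g ⟨a, u⟩
    have h2 : Ψ (g • u) = g • Ψ u := by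
      funext j
      rw [hΨapply]
      show ∑ l, c j l • (g • u l) = g • Ψ u j
      rw [hΨapply, Finset.smul_sum]
      exact Finset.sum_congr rfl fun l _ => (smul_comm g (c j l) (u l)).symm
    show (g • a, Ψ (g • u)) = (g • a, g • Ψ u)
    rw [h2]
  refine ⟨ι, hιmono, f ∘ Φ, hfpoly.comp_linear Φ, ?_, ?_⟩
  · intro g x
    show f (Φ (g • x)) = f (Φ x)
    rw [hΦequiv, hfinv]
  · show f (Φ (w, v ∘ ι)) ≠ f (Φ (w', v' ∘ ι))
    have h1 : Φ (w, v ∘ ι) = (w, v) := by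
      show (w, Ψ (v ∘ ι)) = (w, v)
      rw [hΨv]
    have h2 : Φ (w', v' ∘ ι) = (w', v') := by
      show (w', Ψ (v' ∘ ι)) = (w', v')
      rw [hΨv']
    rw [h1, h2]
    exact hfne
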